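/- Let ρ, ρ_1, ρ_2 be runs of a d-VASS V with the same source, ρ ⊴ ρ_1 and ρ ⊴ ρ_2, and suppose trg(ρ_1) = trg(ρ) + δ_1 and trg(ρ_2) = trg(ρ) + δ_2 for vectors δ_1, δ_2 ∈ ℕ^d. Then there exists a run ρ' of V with the same source such that ρ ⊴ ρ' and trg(ρ') = trg(ρ) + δ_1 + δ_2. -/

import Mathlib

/-- A configuration of a `d`-VASS with states `Q`. -/
abbrev Conf (Q : Type) (d : ℕ) := Q × (Fin d → ℕ)

/-- A transition of a `d`-VASS with states `Q`. -/
abbrev VTrans (Q : Type) (d : ℕ) := Q × (Fin d → ℤ) × Q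

/-- An anchored transition: a transition together with its source and target configurations. -/
abbrev AncTrans (Q : Type) (d : ℕ) := Conf Q d × VTrans Q d × Conf Q d

/-- Validity of an anchored transition with respect to the transition set `T`. -/
def ValidAnc {Q : Type} {d : ℕ} (T : Set (VTrans Q d)) (m : AncTrans Q d) : Prop :=
  m.2.1 ∈ T ∧ m.1.1 = m.2.1.1 ∧ m.2.2.1 = m.2.1.2.2 ∧
  ∀ i, (m.2.2.2 i : ℤ) = (m.1.2 i : ℤ) + m.2.1.2.1 i

/-- A run: a nonempty sequence of consecutive valid anchored transitions. -/
structure Run (Q : Type) (d : ℕ) (T : Set (VTrans Q d)) where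
  len : ℕ
  pos : 0 < len
  m : Fin len → AncTrans Q d
  valid : ∀ i, ValidAnc T (m i)
  chain : ∀ (i : Fin len) (h : i.1 + 1 < len), (m i).2.2 = (m ⟨i.1 + 1, h⟩).1

/-- The source configuration of a run. -/
def Run.src {Q : Type} {d : ℕ} {T : Set (VTrans Q d)} (ρ : Run Q d T) : Conf Q d :=
  (ρ.m ⟨0, ρ.pos⟩).1

/-- The target configuration of a run. -/
def Run.trg {Q : Type} {d : ℕ} {T : Set (VTrans Q d)} (ρ : Run Q d T) : Conf Q d :=
  (ρ.m ⟨ρ.len - 1, by have := ρ.pos; omega⟩).2.2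

/-- Componentwise order on configurations (equal states). -/
def ConfLe {Q : Type} {d : ℕ} (c c' : Conf Q d) : Prop := c.1 = c'.1 ∧ c.2 ≤ c'.2

/-- Domination order on anchored transitions: equal transitions, dominated configurations. -/
def AncLe {Q : Type} {d : ℕ} (m m' : AncTrans Q d) : Prop :=
  m.2.1 = m'.2.1 ∧ ConfLe m.1 m'.1 ∧ ConfLe m.2.2 m'.2.2

/-- The embedding order `⊴` on runs: the anchored transitions of `ρ` embed into those
of `ρ'`, with the last anchored transition of `ρ` matched to the last one of `ρ'`. -/
def RunEmbed {Q : Type} {d : ℕ} {T : Set (VTrans Q d)} (ρ ρ' : Run Q d T) : Prop :=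
  ∃ f : Fin ρ.len → Fin ρ'.len, StrictMono f ∧
    (f ⟨ρ.len - 1, by have := ρ.pos; omega⟩).1 = ρ'.len - 1 ∧
    ∀ j, AncLe (ρ.m j) (ρ'.m (f j))

/-- The variant `⊴'` of the embedding order matching the first anchored transitions. -/
def RunEmbed' {Q : Type} {d : ℕ} {T : Set (VTrans Q d)} (ρ ρ' : Run Q d T) : Prop :=
  ∃ f : Fin ρ.len → Fin ρ'.len, StrictMono f ∧
    (f ⟨0, ρ.pos⟩).1 = 0 ∧
    ∀ j, AncLe (ρ.m j) (ρ'.m (f j))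

/-- One step of a VASS with transition set `T`. -/
def Step {Q : Type} {d : ℕ} (T : Set (VTrans Q d)) (c c' : Conf Q d) : Prop :=
  ∃ t ∈ T, c.1 = t.1 ∧ c'.1 = t.2.2 ∧ ∀ i, (c'.2 i : ℤ) = (c.2 i : ℤ) + t.2.1 i

/-- Reachability in a VASS with transition set `T`. -/
def Reach {Q : Type} {d : ℕ} (T : Set (VTrans Q d)) : Conf Q d → Conf Q d → Prop :=
  Relation.ReflTransGen (Step T)

/-- Adding a nonnegative vector to a configuration. -/
def confAdd {Q : Type} {d : ℕ} (c : Conf Q d) (δ : Fin d → ℕ) : Conf Q d :=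
  (c.1, c.2 + δ)

section Helpers
variable {Q : Type} {d : ℕ} {T : Set (VTrans Q d)}

lemma Run.m_congr (r : Run Q d T) {a b : ℕ} (ha : a < r.len) (hb : b < r.len) (h : a = b) :
    r.m ⟨a, ha⟩ = r.m ⟨b, hb⟩ := by subst h; rfl

/-- Shift an anchored transition by a nonnegative vector. -/
def ancShift (ν : Fin d → ℕ) (a : AncTrans Q d) : AncTrans Q d :=
  (confAdd a.1 ν, a.2.1, confAdd a.2.2 ν)

lemma validAnc_shift {ν : Fin d → ℕ} {a : AncTrans Q d} (h : ValidAnc T a) :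
    ValidAnc T (ancShift ν a) := by
  obtain ⟨h1, h2, h3, h4⟩ := h
  refine ⟨h1, h2, h3, fun i => ?_⟩
  have := h4 i
  simp only [ancShift, confAdd, Pi.add_apply]
  push_cast
  omega

lemma confLe_confAdd {c c' : Conf Q d} (ν : Fin d → ℕ) (h : ConfLe c c') :
    ConfLe c (confAdd c' ν) :=
  ⟨h.1, le_trans h.2 (fun i => Nat.le_add_right _ _)⟩

lemma ancLe_shift {a b : AncTrans Q d} (ν : Fin d → ℕ) (h : AncLe a b) :
    AncLe a (ancShift ν b) :=
  ⟨h.1, confLe_confAdd ν h.2.1, confLe_confAdd ν h.2.2⟩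

/-- Shift a whole run by a nonnegative vector. -/
def Run.shift (r : Run Q d T) (ν : Fin d → ℕ) : Run Q d T where
  len := r.len
  pos := r.pos
  m i := ancShift ν (r.m i)
  valid i := validAnc_shift (r.valid i)
  chain i h := by
    show confAdd (r.m i).2.2 ν = confAdd (r.m ⟨i.1+1, h⟩).1 ν
    rw [r.chain i h]

@[simp] lemma Run.shift_len (r : Run Q d T) (ν : Fin d → ℕ) : (r.shift ν).len = r.len := rfl
@[simp] lemma Run.shift_m (r : Run Q d T) (ν : Fin d → ℕ) (i) :
    (r.shift ν).m i = ancShift ν (r.m i) := rfl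
lemma Run.shift_src (r : Run Q d T) (ν : Fin d → ℕ) : (r.shift ν).src = confAdd r.src ν := rfl
lemma Run.shift_trg (r : Run Q d T) (ν : Fin d → ℕ) : (r.shift ν).trg = confAdd r.trg ν := rfl

/-- A contiguous slice of a run, from index `a` to index `b`, inclusive. -/
def Run.slice (r : Run Q d T) (a b : ℕ) (hab : a ≤ b) (hb : b < r.len) : Run Q d T where
  len := b - a + 1
  pos := by omega
  m i := r.m ⟨a + i.1, by have h := i.2; omega⟩
  valid i := r.valid _
  chain i h := by
    have h2 : (a + i.1) + 1 < r.len := by omega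
    have := r.chain ⟨a + i.1, by omega⟩ h2
    exact this

@[simp] lemma Run.slice_len (r : Run Q d T) (a b hab hb) :
    (r.slice a b hab hb).len = b - a + 1 := rfl
lemma Run.slice_m (r : Run Q d T) (a b hab hb) (i) :
    (r.slice a b hab hb).m i =
      r.m ⟨a + i.1, by have h : i.1 < b - a + 1 := i.2; omega⟩ := rfl
lemma Run.slice_src (r : Run Q d T) (a b hab hb) :
    (r.slice a b hab hb).src = (r.m ⟨a, by omega⟩).1 := rfl
lemma Run.slice_trg (r : Run Q d T) (a b hab hb) :
    (r.slice a b hab hb).trg = (r.m ⟨b, hb⟩).2.2 :=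
  congrArg (fun x => x.2.2)
    (r.m_congr (show a + (b - a) < r.len by omega) hb (by omega))

/-- Concatenation of two runs, when the target of the first is the source of the second. -/
def Run.concat (r s : Run Q d T) (h : r.trg = s.src) : Run Q d T where
  len := r.len + s.len
  pos := by have := r.pos; omega
  m i := if h' : i.1 < r.len then r.m ⟨i.1, h'⟩
         else s.m ⟨i.1 - r.len, by have := i.2; omega⟩
  valid i := by
    split
    · exact r.valid _
    · exact s.valid _
  chain i hi := by
    dsimp only
    by_cases h1 : i.1 + 1 < r.len
    · rw [dif_pos (by omega), dif_pos h1]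
      exact r.chain ⟨i.1, by omega⟩ h1
    · by_cases h2 : i.1 < r.len
      · rw [dif_pos h2, dif_neg (by omega)]
        rw [r.m_congr h2 (show r.len - 1 < r.len by have := r.pos; omega) (by omega),
            s.m_congr _ s.pos (by omega)]
        exact h
      · rw [dif_neg h2, dif_neg (by omega)]
        have h5 : (i.1 - r.len) + 1 < s.len := by omega
        have := s.chain ⟨i.1 - r.len, by omega⟩ h5
        rw [s.m_congr (show i.1 + 1 - r.len < s.len by omega) h5 (by omega)]
        exact this

@[simp] lemma Run.concat_len (r s : Run Q d T) (h) : (r.concat s h).len = r.len + s.len := rfl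
lemma Run.concat_m_left (r s : Run Q d T) (h) (i : Fin (r.len + s.len)) (hi : i.1 < r.len) :
    (r.concat s h).m i = r.m ⟨i.1, hi⟩ := dif_pos hi
lemma Run.concat_m_right (r s : Run Q d T) (h) (i : Fin (r.len + s.len)) (hi : ¬ i.1 < r.len) :
    (r.concat s h).m i = s.m ⟨i.1 - r.len, by have := i.2; omega⟩ := dif_neg hi
lemma Run.concat_src (r s : Run Q d T) (h) : (r.concat s h).src = r.src := by
  show (if h' : _ then _ else _ : AncTrans Q d).1 = _
  rw [dif_pos r.pos]
  rfl
lemma Run.concat_m_last (r s : Run Q d T) (h) :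
    (r.concat s h).m ⟨r.len + s.len - 1,
      by show r.len + s.len - 1 < r.len + s.len; have := s.pos; omega⟩
      = s.m ⟨s.len - 1, by have := s.pos; omega⟩ := by
  have h1 : ¬ (r.len + s.len - 1 < r.len) := by have := s.pos; omega
  refine (Run.concat_m_right r s h _ h1).trans ?_
  exact s.m_congr _ _ (by show r.len + s.len - 1 - r.len = s.len - 1; omega)
lemma Run.concat_trg (r s : Run Q d T) (h) : (r.concat s h).trg = s.trg :=
  congrArg (fun x => x.2.2) (Run.concat_m_last r s h)

end Helpers

section Steps
variable {Q : Type} {d : ℕ} {T : Set (VTrans Q d)}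

lemma conf_ext {c c' : Conf Q d} (h1 : c.1 = c'.1) (h2 : ∀ i, c.2 i = c'.2 i) : c = c' := by
  obtain ⟨q, v⟩ := c; obtain ⟨q', v'⟩ := c'
  dsimp at h1 h2
  subst h1
  exact congrArg _ (funext h2)

lemma init_step (ρ E : Run Q d T) (hEsrc : E.src = ρ.src)
    (X : AncTrans Q d)
    (hX : E.m ⟨E.len - 1, by have := E.pos; omega⟩ = X)
    (hXle : AncLe (ρ.m ⟨0, ρ.pos⟩) X) :
    ∃ (π : Run Q d T) (g : Fin ρ.len → Fin π.len),
      π.src = ρ.src ∧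
      (∀ k l : Fin ρ.len, k.1 ≤ 0 → l.1 ≤ 0 → k < l → g k < g l) ∧
      (∀ k : Fin ρ.len, k.1 ≤ 0 → AncLe (ρ.m k) (π.m (g k))) ∧
      (g ⟨0, ρ.pos⟩).1 = π.len - 1 ∧
      π.m (g ⟨0, ρ.pos⟩) = X := by
  refine ⟨E, fun _ => ⟨E.len - 1, by have := E.pos; omega⟩, hEsrc, ?_, ?_, rfl, hX⟩
  · intro k l hk hl hkl
    exact absurd (Fin.lt_def.mp hkl) (by omega)
  · intro k hk
    have hk1 : k = ⟨0, ρ.pos⟩ := Fin.ext (show k.1 = 0 by omega)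
    rw [hk1, hX]
    exact hXle

lemma extend_step (ρ π E : Run Q d T) (hglue : π.trg = E.src)
    (j : ℕ) (hj : j < ρ.len) (hj1 : j + 1 < ρ.len)
    (g : Fin ρ.len → Fin π.len)
    (hsrc : π.src = ρ.src)
    (hmono : ∀ k l : Fin ρ.len, k.1 ≤ j → l.1 ≤ j → k < l → g k < g l)
    (hanc : ∀ k : Fin ρ.len, k.1 ≤ j → AncLe (ρ.m k) (π.m (g k)))
    (X : AncTrans Q d)
    (hX : E.m ⟨E.len - 1, by have := E.pos; omega⟩ = X)
    (hXle : AncLe (ρ.m ⟨j+1, hj1⟩) X) :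
    ∃ (π' : Run Q d T) (g' : Fin ρ.len → Fin π'.len),
      π'.src = ρ.src ∧
      (∀ k l : Fin ρ.len, k.1 ≤ j+1 → l.1 ≤ j+1 → k < l → g' k < g' l) ∧
      (∀ k : Fin ρ.len, k.1 ≤ j+1 → AncLe (ρ.m k) (π'.m (g' k))) ∧
      (g' ⟨j+1, hj1⟩).1 = π'.len - 1 ∧
      π'.m (g' ⟨j+1, hj1⟩) = X := by
  have hle : π.len ≤ π.len + E.len := Nat.le_add_right _ _
  have hlast : π.len + E.len - 1 < π.len + E.len := by have := π.pos; omega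
  refine ⟨π.concat E hglue,
    fun k => if k.1 ≤ j then Fin.castLE hle (g k) else ⟨π.len + E.len - 1, hlast⟩,
    ?_, ?_, ?_, ?_, ?_⟩
  · rw [Run.concat_src]; exact hsrc
  · intro k l hk hl hkl
    by_cases hkj : k.1 ≤ j <;> by_cases hlj : l.1 ≤ j
    · simp only [if_pos hkj, if_pos hlj]
      exact Fin.lt_def.mpr (by simpa using Fin.lt_def.mp (hmono k l hkj hlj hkl))
    · simp only [if_pos hkj, if_neg hlj]
      refine Fin.lt_def.mpr ?_
      have h1 : (g k).1 < π.len := (g k).2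
      simp only [Fin.coe_castLE]
      have := E.pos
      show (g k).1 < π.len + E.len - 1
      omega
    · exfalso; have := Fin.lt_def.mp hkl; omega
    · exfalso; have := Fin.lt_def.mp hkl; omega
  · intro k hk
    by_cases hkj : k.1 ≤ j
    · simp only [if_pos hkj]
      have e : (π.concat E hglue).m (Fin.castLE hle (g k)) = π.m (g k) :=
        (Run.concat_m_left π E hglue _ ((g k).2)).trans (congrArg π.m (Fin.ext rfl))
      rw [e]; exact hanc k hkj
    · simp only [if_neg hkj]
      have hk1 : k = ⟨j+1, hj1⟩ := Fin.ext (show k.1 = j + 1 by omega)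
      have e : (π.concat E hglue).m ⟨π.len + E.len - 1, hlast⟩ = X :=
        (Run.concat_m_last π E hglue).trans hX
      rw [hk1, e]
      exact hXle
  · show (if j + 1 ≤ j then Fin.castLE hle (g ⟨j+1, hj1⟩) else ⟨π.len + E.len - 1, hlast⟩).1
        = (π.concat E hglue).len - 1
    rw [if_neg (Nat.not_succ_le_self j)]
    rfl
  · show (π.concat E hglue).m
        (if j + 1 ≤ j then Fin.castLE hle (g ⟨j+1, hj1⟩) else ⟨π.len + E.len - 1, hlast⟩) = X
    rw [if_neg (Nat.not_succ_le_self j)]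
    exact (Run.concat_m_last π E hglue).trans hX

end Steps

/-- Additivity of runs dominating a fixed run. -/
theorem stmt_6 {Q : Type} {d : ℕ} {T : Set (VTrans Q d)}
    (ρ ρ₁ ρ₂ : Run Q d T)
    (hs₁ : ρ₁.src = ρ.src) (hs₂ : ρ₂.src = ρ.src)
    (h₁ : RunEmbed ρ ρ₁) (h₂ : RunEmbed ρ ρ₂)
    (δ₁ δ₂ : Fin d → ℕ)
    (ht₁ : ρ₁.trg = confAdd ρ.trg δ₁) (ht₂ : ρ₂.trg = confAdd ρ.trg δ₂) :
    ∃ ρ' : Run Q d T, ρ'.src = ρ.src ∧ RunEmbed ρ ρ' ∧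
      ρ'.trg = confAdd ρ.trg (δ₁ + δ₂) := by
  obtain ⟨f₁, hf₁m, hf₁l, hf₁a⟩ := h₁
  obtain ⟨f₂, hf₂m, hf₂l, hf₂a⟩ := h₂
  -- the offset of ρ₁ over ρ at matched position j
  obtain ⟨dv, hd1, hd2⟩ : ∃ dv : Fin ρ.len → Fin d → ℕ,
      (∀ j i, (ρ₁.m (f₁ j)).1.2 i = (ρ.m j).1.2 i + dv j i) ∧
      (∀ j i, (ρ₁.m (f₁ j)).2.2.2 i = (ρ.m j).2.2.2 i + dv j i) := by
    refine ⟨fun j i => (ρ₁.m (f₁ j)).1.2 i - (ρ.m j).1.2 i, fun j i => ?_, fun j i => ?_⟩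
    · have h : (ρ.m j).1.2 i ≤ (ρ₁.m (f₁ j)).1.2 i := (hf₁a j).2.1.2 i
      show (ρ₁.m (f₁ j)).1.2 i = (ρ.m j).1.2 i + ((ρ₁.m (f₁ j)).1.2 i - (ρ.m j).1.2 i)
      omega
    · have h : (ρ.m j).1.2 i ≤ (ρ₁.m (f₁ j)).1.2 i := (hf₁a j).2.1.2 i
      have v1 := (ρ.valid j).2.2.2 i
      have v2 := (ρ₁.valid (f₁ j)).2.2.2 i
      rw [← (hf₁a j).1] at v2
      show (ρ₁.m (f₁ j)).2.2.2 i = (ρ.m j).2.2.2 i + ((ρ₁.m (f₁ j)).1.2 i - (ρ.m j).1.2 i)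
      omega
  -- the offset of ρ₂ over ρ at matched position j
  obtain ⟨ev, he1, he2⟩ : ∃ ev : Fin ρ.len → Fin d → ℕ,
      (∀ j i, (ρ₂.m (f₂ j)).1.2 i = (ρ.m j).1.2 i + ev j i) ∧
      (∀ j i, (ρ₂.m (f₂ j)).2.2.2 i = (ρ.m j).2.2.2 i + ev j i) := by
    refine ⟨fun j i => (ρ₂.m (f₂ j)).1.2 i - (ρ.m j).1.2 i, fun j i => ?_, fun j i => ?_⟩
    · have h : (ρ.m j).1.2 i ≤ (ρ₂.m (f₂ j)).1.2 i := (hf₂a j).2.1.2 i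
      show (ρ₂.m (f₂ j)).1.2 i = (ρ.m j).1.2 i + ((ρ₂.m (f₂ j)).1.2 i - (ρ.m j).1.2 i)
      omega
    · have h : (ρ.m j).1.2 i ≤ (ρ₂.m (f₂ j)).1.2 i := (hf₂a j).2.1.2 i
      have v1 := (ρ.valid j).2.2.2 i
      have v2 := (ρ₂.valid (f₂ j)).2.2.2 i
      rw [← (hf₂a j).1] at v2
      show (ρ₂.m (f₂ j)).2.2.2 i = (ρ.m j).2.2.2 i + ((ρ₂.m (f₂ j)).1.2 i - (ρ.m j).1.2 i)
      omega
  -- main induction on the matched position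
  have main : ∀ (j : ℕ) (hj : j < ρ.len), ∃ (π : Run Q d T) (g : Fin ρ.len → Fin π.len),
      π.src = ρ.src ∧
      (∀ k l : Fin ρ.len, k.1 ≤ j → l.1 ≤ j → k < l → g k < g l) ∧
      (∀ k : Fin ρ.len, k.1 ≤ j → AncLe (ρ.m k) (π.m (g k))) ∧
      (g ⟨j, hj⟩).1 = π.len - 1 ∧
      π.m (g ⟨j, hj⟩) = ancShift (dv ⟨j, hj⟩) (ρ₂.m (f₂ ⟨j, hj⟩)) := by
    intro j
    induction j with
    | zero =>
      intro hj
      set j0 : Fin ρ.len := ⟨0, hj⟩ with hj0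
      set X : AncTrans Q d := ancShift (dv j0) (ρ₂.m (f₂ j0)) with hX
      set S₀ : Run Q d T :=
        (ρ₂.slice 0 (f₂ j0).1 (Nat.zero_le _) (f₂ j0).2).shift (dv j0) with hS₀
      have hS₀last : S₀.m ⟨S₀.len - 1, by have := S₀.pos; omega⟩ = X :=
        congrArg (ancShift (dv j0)) (congrArg ρ₂.m
          (Fin.ext (show 0 + ((f₂ j0).1 - 0 + 1 - 1) = (f₂ j0).1 by omega)))
      have hXle : AncLe (ρ.m ⟨0, ρ.pos⟩) X := ancLe_shift _ (hf₂a j0)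
      rcases Nat.eq_zero_or_pos (f₁ j0).1 with hcase | hcase
      · -- no initial insertion from ρ₁
        have hdv0 : ∀ i, dv j0 i = 0 := by
          intro i
          have h1 := hd1 j0 i
          have e : ρ₁.m (f₁ j0) = ρ₁.m ⟨0, ρ₁.pos⟩ := congrArg ρ₁.m (Fin.ext hcase)
          have e2 : (ρ₁.m (f₁ j0)).1.2 i = (ρ.m j0).1.2 i := by
            rw [e]
            exact congrArg (fun c => c.2 i) hs₁
          omega
        have hEsrc : S₀.src = ρ.src := by
          rw [hS₀, Run.shift_src, Run.slice_src]
          refine conf_ext ?_ ?_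
          · exact congrArg (fun c => c.1) hs₂
          · intro i
            have h0 := congrArg (fun c => c.2 i) hs₂
            show ρ₂.src.2 i + dv j0 i = ρ.src.2 i
            rw [hdv0 i]
            omega
        exact init_step ρ S₀ hEsrc X hS₀last hXle
      · -- ρ₁ inserts a nonempty prefix
        set I₀ : Run Q d T :=
          ρ₁.slice 0 ((f₁ j0).1 - 1) (by omega) (by have := (f₁ j0).2; omega) with hI₀
        have hItrg : I₀.trg = (ρ₁.m (f₁ j0)).1 := by
          rw [hI₀, Run.slice_trg]
          exact (ρ₁.chain ⟨(f₁ j0).1 - 1, by have := (f₁ j0).2; omega⟩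
              (show (f₁ j0).1 - 1 + 1 < ρ₁.len by have := (f₁ j0).2; omega)).trans
            (congrArg (fun x => (ρ₁.m x).1)
              (Fin.ext (show (f₁ j0).1 - 1 + 1 = (f₁ j0).1 by omega)))
        have hglue : I₀.trg = S₀.src := by
          rw [hItrg, hS₀, Run.shift_src, Run.slice_src]
          refine conf_ext ?_ ?_
          · exact ((hf₁a j0).2.1.1).symm.trans
              (congrArg (fun c : Conf Q d => c.1) hs₂).symm
          · intro i
            have h1 := hd1 j0 i
            have ha := congrArg (fun c : Conf Q d => c.2 i) hs₂
            have hb : (ρ.m j0).1.2 i = ρ.src.2 i := rfl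
            show (ρ₁.m (f₁ j0)).1.2 i = ρ₂.src.2 i + dv j0 i
            omega
        have hEsrc : (I₀.concat S₀ hglue).src = ρ.src := by
          rw [Run.concat_src, hI₀, Run.slice_src]
          exact hs₁
        have hElast : (I₀.concat S₀ hglue).m
            ⟨(I₀.concat S₀ hglue).len - 1, by have := (I₀.concat S₀ hglue).pos; omega⟩ = X :=
          (Run.concat_m_last I₀ S₀ hglue).trans hS₀last
        exact init_step ρ (I₀.concat S₀ hglue) hEsrc X hElast hXle
    | succ j IH =>
      intro hj1
      have hj : j < ρ.len := by omega
      obtain ⟨π, g, hsrc, hmono, hanc, hglast, hmlast⟩ := IH hj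
      set jF : Fin ρ.len := ⟨j, hj⟩ with hjF
      set jS : Fin ρ.len := ⟨j + 1, hj1⟩ with hjS
      have hf₁j : (f₁ jF).1 < (f₁ jS).1 :=
        Fin.lt_def.mp (hf₁m (Fin.mk_lt_mk.mpr (Nat.lt_succ_self j)))
      have hf₂j : (f₂ jF).1 < (f₂ jS).1 :=
        Fin.lt_def.mp (hf₂m (Fin.mk_lt_mk.mpr (Nat.lt_succ_self j)))
      set X : AncTrans Q d := ancShift (dv jS) (ρ₂.m (f₂ jS)) with hX
      set S : Run Q d T :=
        (ρ₂.slice ((f₂ jF).1 + 1) (f₂ jS).1 (by omega) (f₂ jS).2).shift (dv jS) with hS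
      have hSlast : S.m ⟨S.len - 1, by have := S.pos; omega⟩ = X :=
        congrArg (ancShift (dv jS)) (congrArg ρ₂.m
          (Fin.ext (show (f₂ jF).1 + 1 + ((f₂ jS).1 - ((f₂ jF).1 + 1) + 1 - 1) = (f₂ jS).1
            by omega)))
      have hSsrc : S.src = confAdd ((ρ₂.m (f₂ jF)).2.2) (dv jS) := by
        rw [hS, Run.shift_src, Run.slice_src]
        exact congrArg (fun c => confAdd c (dv jS))
          (ρ₂.chain (f₂ jF) (by have := (f₂ jS).2; omega)).symm
      have hπtrg : π.trg = confAdd ((ρ₂.m (f₂ jF)).2.2) (dv jF) := by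
        have e1 : π.m ⟨π.len - 1, by have := π.pos; omega⟩ = π.m (g jF) :=
          congrArg π.m (Fin.ext hglast.symm)
        show (π.m ⟨π.len - 1, by have := π.pos; omega⟩).2.2 = _
        rw [e1, hmlast]
        rfl
      have hXle : AncLe (ρ.m ⟨j + 1, hj1⟩) X := ancLe_shift _ (hf₂a jS)
      have hρch : (ρ.m jF).2.2 = (ρ.m jS).1 := ρ.chain jF hj1
      rcases Nat.lt_or_ge ((f₁ jF).1 + 1) (f₁ jS).1 with hB | hA'
      · -- ρ₁ inserts a nonempty block between matched positions j and j+1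
        set I : Run Q d T :=
          (ρ₁.slice ((f₁ jF).1 + 1) ((f₁ jS).1 - 1) (by omega)
            (by have := (f₁ jS).2; omega)).shift (ev jF) with hI
        have hIsrc : I.src = confAdd ((ρ₁.m (f₁ jF)).2.2) (ev jF) := by
          rw [hI, Run.shift_src, Run.slice_src]
          exact congrArg (fun c => confAdd c (ev jF))
            (ρ₁.chain (f₁ jF) (by have := (f₁ jS).2; omega)).symm
        have hItrg : I.trg = confAdd ((ρ₁.m (f₁ jS)).1) (ev jF) := by
          rw [hI, Run.shift_trg, Run.slice_trg]
          exact congrArg (fun c => confAdd c (ev jF))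
            ((ρ₁.chain ⟨(f₁ jS).1 - 1, by have := (f₁ jS).2; omega⟩
                (show (f₁ jS).1 - 1 + 1 < ρ₁.len by have := (f₁ jS).2; omega)).trans
              (congrArg (fun x => (ρ₁.m x).1)
                (Fin.ext (show (f₁ jS).1 - 1 + 1 = (f₁ jS).1 by omega))))
        have hglue2 : I.trg = S.src := by
          rw [hItrg, hSsrc]
          refine conf_ext ?_ ?_
          · exact ((hf₁a jS).2.1.1).symm.trans
              ((congrArg (fun c => c.1) hρch).symm.trans ((hf₂a jF).2.2.1))
          · intro i
            have h1 := hd1 jS i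
            have h2 := he2 jF i
            have h3 := congrArg (fun c => c.2 i) hρch
            show (ρ₁.m (f₁ jS)).1.2 i + ev jF i = (ρ₂.m (f₂ jF)).2.2.2 i + dv jS i
            omega
        have hglue : π.trg = (I.concat S hglue2).src := by
          rw [Run.concat_src, hπtrg, hIsrc]
          refine conf_ext ?_ ?_
          · exact ((hf₂a jF).2.2.1).symm.trans ((hf₁a jF).2.2.1)
          · intro i
            have h1 := hd2 jF i
            have h2 := he2 jF i
            show (ρ₂.m (f₂ jF)).2.2.2 i + dv jF i = (ρ₁.m (f₁ jF)).2.2.2 i + ev jF i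
            omega
        have hElast : (I.concat S hglue2).m
            ⟨(I.concat S hglue2).len - 1, by have := (I.concat S hglue2).pos; omega⟩ = X :=
          (Run.concat_m_last I S hglue2).trans hSlast
        exact extend_step ρ π (I.concat S hglue2) hglue j hj hj1 g hsrc hmono hanc X hElast hXle
      · -- no insertion from ρ₁ between matched positions j and j+1
        have hA : (f₁ jS).1 = (f₁ jF).1 + 1 := by omega
        have hdveq : ∀ i, dv jS i = dv jF i := by
          intro i
          have h1 := hd1 jS i
          have h2 := hd2 jF i
          have h3 : (ρ₁.m (f₁ jF)).2.2 = (ρ₁.m (f₁ jS)).1 :=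
            (ρ₁.chain (f₁ jF) (by have := (f₁ jS).2; omega)).trans
              (congrArg (fun x => (ρ₁.m x).1) (Fin.ext hA.symm))
          have h5 := congrArg (fun c => c.2 i) h3
          have h6 := congrArg (fun c => c.2 i) hρch
          omega
        have hglue : π.trg = S.src := by
          rw [hπtrg, hSsrc]
          refine conf_ext rfl ?_
          intro i
          show (ρ₂.m (f₂ jF)).2.2.2 i + dv jF i = (ρ₂.m (f₂ jF)).2.2.2 i + dv jS i
          rw [hdveq i]
        exact extend_step ρ π S hglue j hj hj1 g hsrc hmono hanc X hSlast hXle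
  -- assemble the final answer
  have hlastlt : ρ.len - 1 < ρ.len := by have := ρ.pos; omega
  obtain ⟨π, g, hsrc, hmono, hanc, hglast, hmlast⟩ := main (ρ.len - 1) hlastlt
  set lastF : Fin ρ.len := ⟨ρ.len - 1, hlastlt⟩ with hlastF
  have hdlast : ∀ i, dv lastF i = δ₁ i := by
    intro i
    have h1 := hd2 lastF i
    have e : ρ₁.m (f₁ lastF) = ρ₁.m ⟨ρ₁.len - 1, by have := ρ₁.pos; omega⟩ :=
      congrArg ρ₁.m (Fin.ext hf₁l)
    have e2 : (ρ₁.m (f₁ lastF)).2.2 = confAdd ρ.trg δ₁ := by rw [e]; exact ht₁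
    have e3 := congrArg (fun c => c.2 i) e2
    dsimp [confAdd] at e3
    have e4 : (ρ.m lastF).2.2.2 i = ρ.trg.2 i := rfl
    omega
  refine ⟨π, hsrc, ⟨g, ?_, ?_, ?_⟩, ?_⟩
  · intro k l hkl
    exact hmono k l (by have := k.2; omega) (by have := l.2; omega) hkl
  · exact hglast
  · exact fun k => hanc k (by have := k.2; omega)
  · have e1 : π.m ⟨π.len - 1, by have := π.pos; omega⟩ = π.m (g lastF) :=
      congrArg π.m (Fin.ext hglast.symm)
    show (π.m ⟨π.len - 1, by have := π.pos; omega⟩).2.2 = _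
    rw [e1, hmlast]
    have e2 : ρ₂.m (f₂ lastF) = ρ₂.m ⟨ρ₂.len - 1, by have := ρ₂.pos; omega⟩ :=
      congrArg ρ₂.m (Fin.ext hf₂l)
    show confAdd ((ρ₂.m (f₂ lastF)).2.2) (dv lastF) = confAdd ρ.trg (δ₁ + δ₂)
    rw [e2]
    have e3 : (ρ₂.m ⟨ρ₂.len - 1, by have := ρ₂.pos; omega⟩ : AncTrans Q d).2.2
        = confAdd ρ.trg δ₂ := ht₂
    rw [e3]
    refine conf_ext rfl ?_
    intro i
    show ρ.trg.2 i + δ₂ i + dv lastF i = ρ.trg.2 i + (δ₁ i + δ₂ i)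
    rw [hdlast i]
    omega
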